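/- Let $\lambda_1 \ge \lambda_2 \ge \lambda_3$ be real numbers with $\lambda_1 + \lambda_2 + \lambda_3 = 0$, and let $S > 0$. Suppose $\lambda_1 \ge S/6$ and $\lambda_3 \le -\frac{\lambda_1}{2} - \lambda_1 \sqrt{\frac{3(\lambda_1 - S/6)}{4(3\lambda_1 + S/6)}}$. Then $S(\lambda_1^2 + \lambda_2^2 + \lambda_3^2) \ge 36 \lambda_1 \lambda_2 \lambda_3$. -/

import Mathlib

theorem stmt_2 (l1 l2 l3 S : ℝ) (h12 : l2 ≤ l1) (h23 : l3 ≤ l2)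
    (hsum : l1 + l2 + l3 = 0) (hS : 0 < S) (h1 : S / 6 ≤ l1)
    (h3 : l3 ≤ -(l1 / 2) - l1 * Real.sqrt (3 * (l1 - S / 6) / (4 * (3 * l1 + S / 6)))) :
    36 * (l1 * l2 * l3) ≤ S * (l1 ^ 2 + l2 ^ 2 + l3 ^ 2) := by
  set R := 3 * (l1 - S / 6) / (4 * (3 * l1 + S / 6)) with hRdef
  have hl1 : 0 < l1 := lt_of_lt_of_le (by linarith) h1
  have hden : 0 < 4 * (3 * l1 + S / 6) := by linarith
  have hR : 0 ≤ R := div_nonneg (by linarith) hden.le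
  have hsq : Real.sqrt R ^ 2 = R := Real.sq_sqrt hR
  have hsqnn : 0 ≤ Real.sqrt R := Real.sqrt_nonneg R
  have key : (l1 * Real.sqrt R) ^ 2 ≤ (l3 + l1 / 2) ^ 2 := by
    have h' : l3 + l1 / 2 ≤ -(l1 * Real.sqrt R) := by linarith
    nlinarith [mul_nonneg hl1.le hsqnn]
  have hRval : R * (4 * (3 * l1 + S / 6)) = 3 * (l1 - S / 6) := by
    rw [hRdef]; exact div_mul_cancel₀ _ hden.ne'
  have hl2 : l2 = -l1 - l3 := by linarith
  have ha : 0 < S / 6 + 3 * l1 := by linarith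
  have key2 : (S / 6 + 3 * l1) * (l1 * Real.sqrt R) ^ 2 ≤
      (S / 6 + 3 * l1) * (l3 + l1 / 2) ^ 2 :=
    mul_le_mul_of_nonneg_left key ha.le
  have hL : (S / 6 + 3 * l1) * (l1 * Real.sqrt R) ^ 2 = 3 / 4 * (l1 ^ 2 * (l1 - S / 6)) := by
    have h' : (l1 * Real.sqrt R) ^ 2 = l1 ^ 2 * R := by rw [mul_pow, hsq]
    rw [h']; linear_combination (l1 ^ 2 / 4) * hRval
  rw [hL] at key2
  subst hl2
  nlinarith [key2]
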